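/- If v is a zero neighbor in a binary linear code C, then its extension v^(ex) (obtained by appending an overall parity bit) is a zero neighbor in the extended code C_ex. -/

import Mathlib

open Finset

/-- Support of a binary vector: the set of nonzero coordinates. -/
def supp {n : ℕ} (v : Fin n → ZMod 2) : Finset (Fin n) :=
  Finset.univ.filter fun i => v i ≠ 0

/-- Hamming weight. -/
def wt {n : ℕ} (v : Fin n → ZMod 2) : ℕ := (supp v).card

/-- A nonzero codeword of `D` is a zero neighbor (minimal codeword) if no nonzero
codeword of `D` has support strictly contained in its support. -/
def IsZeroNeighbor {n : ℕ} (D : Set (Fin n → ZMod 2)) (v : Fin n → ZMod 2) : Prop :=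
  v ∈ D ∧ v ≠ 0 ∧ ∀ v' ∈ D, v' ≠ 0 → ¬ supp v' ⊂ supp v

/-- `v` is decomposable in `D` if it is the sum of two nonzero codewords of `D`
with disjoint supports. -/
def Decomposable {n : ℕ} (D : Set (Fin n → ZMod 2)) (v : Fin n → ZMod 2) : Prop :=
  ∃ v1 v2, v1 ∈ D ∧ v2 ∈ D ∧ v1 ≠ 0 ∧ v2 ≠ 0 ∧
    Disjoint (supp v1) (supp v2) ∧ v = v1 + v2

/-- Extension of a vector by its overall parity bit. -/
def extVec {n : ℕ} (v : Fin n → ZMod 2) : Fin (n + 1) → ZMod 2 :=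
  Fin.snoc v (∑ i, v i)

/-- The extended code. -/
def extCode {n : ℕ} (C : Submodule (ZMod 2) (Fin n → ZMod 2)) :
    Set (Fin (n + 1) → ZMod 2) :=
  extVec '' (C : Set (Fin n → ZMod 2))

/-- An even-weight codeword is only-odd-decomposable if it is decomposable and in every
decomposition into nonzero disjoint-support codewords both parts have odd weight. -/
def OnlyOddDecomposable {n : ℕ} (C : Submodule (ZMod 2) (Fin n → ZMod 2))
    (v : Fin n → ZMod 2) : Prop :=
  Even (wt v) ∧ Decomposable (C : Set (Fin n → ZMod 2)) v ∧
    ∀ v1 v2, v1 ∈ C → v2 ∈ C → v1 ≠ 0 → v2 ≠ 0 →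
      Disjoint (supp v1) (supp v2) → v = v1 + v2 → Odd (wt v1) ∧ Odd (wt v2)

/-- `L_w(D)`: the number of zero neighbors of weight `w` in `D`. -/
noncomputable def Lw {n : ℕ} (D : Set (Fin n → ZMod 2)) (w : ℕ) : ℕ :=
  {v : Fin n → ZMod 2 | IsZeroNeighbor D v ∧ wt v = w}.ncard

/-- `N_w(C)`: the number of only-odd-decomposable codewords of weight `w` in `C`. -/
noncomputable def Nw {n : ℕ} (C : Submodule (ZMod 2) (Fin n → ZMod 2)) (w : ℕ) : ℕ :=
  {v : Fin n → ZMod 2 | v ∈ C ∧ OnlyOddDecomposable C v ∧ wt v = w}.ncard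

/-- Action of a coordinate permutation on a vector. -/
def permVec {n : ℕ} (π : Equiv.Perm (Fin n)) (v : Fin n → ZMod 2) : Fin n → ZMod 2 :=
  v ∘ π.symm

/-- `π` is an automorphism of the code `D`. -/
def IsAut {n : ℕ} (D : Set (Fin n → ZMod 2)) (π : Equiv.Perm (Fin n)) : Prop :=
  permVec π '' D = D

/-- The even weight subcode of `C`, as a set. -/
def evenSub {n : ℕ} (C : Submodule (ZMod 2) (Fin n → ZMod 2)) :
    Set (Fin n → ZMod 2) :=
  {v : Fin n → ZMod 2 | v ∈ C ∧ Even (wt v)}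

theorem extend_zero_neighbor {n : ℕ}
    (C : Submodule (ZMod 2) (Fin n → ZMod 2)) (v : Fin n → ZMod 2)
    (hzn : IsZeroNeighbor (C : Set (Fin n → ZMod 2)) v) :
    IsZeroNeighbor (extCode C) (extVec v) := by

  obtain ⟨hv, hv0, hmin⟩ := hzn
  have ext_ne : ∀ u : Fin n → ZMod 2, u ≠ 0 → extVec u ≠ 0 := by
    intro u hu h
    apply hu
    funext i
    have := congrFun h i.castSucc
    simpa [extVec, Fin.snoc_castSucc] using this
  refine ⟨⟨v, hv, rfl⟩, ext_ne v hv0, ?_⟩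
  rintro w' ⟨u, hu, rfl⟩ hu0 hss
  have hune : u ≠ 0 := by
    rintro rfl
    apply hu0
    funext i
    refine Fin.lastCases ?_ ?_ i <;> simp [extVec]
  have hsub : supp u ⊆ supp v := by
    intro i hi
    have h1 : Fin.castSucc i ∈ supp (extVec u) := by
      simp only [supp, Finset.mem_filter, Finset.mem_univ, true_and, extVec,
        Fin.snoc_castSucc] at hi ⊢
      exact Finset.mem_filter.mpr ⟨Finset.mem_univ _, by simpa [Fin.snoc_castSucc] using hi⟩
    have h2 := hss.1 h1
    simp only [supp, Finset.mem_filter, Finset.mem_univ, true_and, extVec,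
      Fin.snoc_castSucc] at h2 ⊢
    simpa [Fin.snoc_castSucc] using (Finset.mem_filter.mp h2).2
  rcases eq_or_ne (supp u) (supp v) with heq | hne
  · have : u = v := by
      funext i
      have hiff : (u i ≠ 0) ↔ (v i ≠ 0) := by
        constructor <;> intro h
        · have : i ∈ supp u := by simp [supp, h]
          rw [heq] at this
          simpa [supp] using this
        · have : i ∈ supp v := by simp [supp, h]
          rw [← heq] at this
          simpa [supp] using this
      by_cases hui : u i = 0
      · by_cases hvi : v i = 0
        · rw [hui, hvi]
        · exact absurd (hiff.mpr hvi) (by simp [hui])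
      · have hvi : v i ≠ 0 := hiff.mp hui
        have : ∀ x : ZMod 2, x ≠ 0 → x = 1 := by decide
        rw [this _ hui, this _ hvi]
    rw [this] at hss
    exact (ssubset_irrefl _) hss
  · exact hmin u hu hune ⟨hsub, fun h => hne (le_antisymm hsub h)⟩
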